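/- Let n ≥ 1 be a natural number, let α be a real number with n − 1 < α < n, and let f : ℝ → ℝ be n times continuously differentiable. Then the left-sided Caputo fractional derivative of order α with base point a, namely x ↦ (1/Γ(n−α)) ∫_a^x (x−z)^{n−α−1} f⁽ⁿ⁾(z) dz, tends to 0 as x tends to a from the right. (Consequently the local fractional derivative of order α of an n-times differentiable function, being the limit as x → a⁺ of its Caputo derivative, is zero for every non-integer α with n−1 < α < n.) -/

import Mathlib

open Real MeasureTheory Filter Topology intervalIntegral

theorem caputo_tendsto_zero (n : ℕ) (hn : 1 ≤ n) (α : ℝ)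
    (hα1 : (n : ℝ) - 1 < α) (hα2 : α < n) (f : ℝ → ℝ) (hf : ContDiff ℝ n f) (a : ℝ) :
    Tendsto (fun x : ℝ =>
        (1 / Real.Gamma ((n : ℝ) - α)) *
          ∫ z in a..x, (x - z) ^ ((n : ℝ) - α - 1) * iteratedDeriv n f z)
      (𝓝[>] a) (𝓝 0) := by
  set β : ℝ := (n : ℝ) - α with hβdef
  have hβ0 : 0 < β := by simp only [hβdef]; linarith
  have hΓ : 0 < Real.Gamma β := Real.Gamma_pos_of_pos hβ0
  have hg : Continuous (iteratedDeriv n f) :=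
    hf.continuous_iteratedDeriv n le_rfl
  obtain ⟨C, hC⟩ :=
    (isCompact_Icc (a := a) (b := a + 1)).exists_bound_of_continuousOn hg.continuousOn
  have hC0 : 0 ≤ C := le_trans (norm_nonneg _) (hC a ⟨le_rfl, by linarith⟩)
  -- value of the base integral
  have hval : ∀ x : ℝ, (∫ z in a..x, (x - z) ^ (β - 1)) = (x - a) ^ β / β := by
    intro x
    rw [intervalIntegral.integral_comp_sub_left (fun z => z ^ (β - 1)) x]
    simp only [sub_self]
    rw [integral_rpow (Or.inl (by linarith : (-1 : ℝ) < β - 1))]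
    have h1 : β - 1 + 1 = β := by ring
    rw [h1, Real.zero_rpow (ne_of_gt hβ0), sub_zero]
  -- integrability of the kernel
  have hker : ∀ x : ℝ, IntervalIntegrable (fun z => (x - z) ^ (β - 1)) volume a x := by
    intro x
    have := (intervalIntegral.intervalIntegrable_rpow'
      (a := 0) (b := x - a) (by linarith : (-1 : ℝ) < β - 1)).comp_sub_left x
    simpa using this.symm
  -- squeeze
  refine squeeze_zero_norm' (a := fun x => (1 / Real.Gamma β) * (C * ((x - a) ^ β / β))) ?_ ?_
  · filter_upwards [Ioo_mem_nhdsGT_of_mem (Set.mem_Ico.mpr ⟨le_rfl, by linarith⟩ :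
      a ∈ Set.Ico a (a + 1))] with x hx
    obtain ⟨hax, hx1⟩ := hx
    have hIoc : Set.uIoc a x = Set.Ioc a x := Set.uIoc_of_le hax.le
    have hbound : ‖∫ z in a..x, (x - z) ^ (β - 1) * iteratedDeriv n f z‖ ≤
        C * ((x - a) ^ β / β) := by
      have h1 : ‖∫ z in a..x, (x - z) ^ (β - 1) * iteratedDeriv n f z‖ ≤
          |∫ z in a..x, C * (x - z) ^ (β - 1)| := by
        apply intervalIntegral.norm_integral_le_abs_of_norm_le
        · rw [MeasureTheory.ae_restrict_iff' measurableSet_uIoc]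
          refine Filter.Eventually.of_forall fun t ht => ?_
          rw [hIoc] at ht
          have hxt : 0 ≤ x - t := sub_nonneg.mpr ht.2
          rw [norm_mul, Real.norm_eq_abs, abs_of_nonneg (Real.rpow_nonneg hxt _)]
          calc (x - t) ^ (β - 1) * ‖iteratedDeriv n f t‖
              ≤ (x - t) ^ (β - 1) * C :=
                mul_le_mul_of_nonneg_left
                  (hC t ⟨ht.1.le, le_trans ht.2 (le_of_lt hx1)⟩)
                  (Real.rpow_nonneg hxt _)
            _ = C * (x - t) ^ (β - 1) := mul_comm _ _
        · exact (hker x).const_mul C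
      refine h1.trans_eq ?_
      rw [intervalIntegral.integral_const_mul, hval]
      have hxa : (0 : ℝ) ≤ x - a := by linarith
      exact abs_of_nonneg (mul_nonneg hC0 (div_nonneg (Real.rpow_nonneg hxa β) hβ0.le))
    calc ‖(1 / Real.Gamma β) * ∫ z in a..x, (x - z) ^ (β - 1) * iteratedDeriv n f z‖
        = (1 / Real.Gamma β) * ‖∫ z in a..x, (x - z) ^ (β - 1) * iteratedDeriv n f z‖ := by
          rw [norm_mul, Real.norm_eq_abs, abs_of_pos (by positivity)]
      _ ≤ (1 / Real.Gamma β) * (C * ((x - a) ^ β / β)) := by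
          apply mul_le_mul_of_nonneg_left hbound (by positivity)
  · have h1 : Tendsto (fun x : ℝ => (x - a) ^ β) (𝓝[>] a) (𝓝 0) := by
      have hc : ContinuousAt (fun y : ℝ => y ^ β) 0 :=
        Real.continuousAt_rpow_const 0 β (Or.inr hβ0.le)
      have h2 : Tendsto (fun x : ℝ => x - a) (𝓝[>] a) (𝓝 0) := by
        have h3 : Continuous (fun x : ℝ => x - a) := continuous_id.sub continuous_const
        have := (h3.tendsto a).mono_left (nhdsWithin_le_nhds (s := Set.Ioi a))
        simpa using this
      have := hc.tendsto.comp h2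
      simpa [Function.comp_def, Real.zero_rpow (ne_of_gt hβ0)] using this
    have := ((h1.div_const β).const_mul C).const_mul (1 / Real.Gamma β)
    simpa using this
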